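/- If a finite digraph G has a path complete decomposition into bicycles, then the set of paths of G contains no infinite antichain under the subpath order. -/

import Mathlib

/-- Edges of a path given as a list of vertices. -/
def pathEdges {V : Type*} (q : List V) : V → V → Prop :=
  fun a b => (a, b) ∈ q.zip q.tail

/-- Edges of a cycle given as a list of vertices (closing edge back to the start). -/
def cycleEdges {V : Type*} (c : List V) : V → V → Prop :=
  fun a b => (a, b) ∈ c.zip (c.rotate 1)

/-- A digraph (given by its edge relation) is a bicycle: two vertex-disjoint simple
cycles connected by a simple path whose internal vertices are disjoint from both
cycles; either or both cycles may be absent, and if neither is absent the connecting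
path has length at least one. -/
def IsBicycle {V : Type*} (F : V → V → Prop) : Prop :=
  ∃ c₁ q c₂ : List V,
    q ≠ [] ∧ q.Nodup ∧ c₁.Nodup ∧ c₂.Nodup ∧
    (∀ v ∈ c₁, v ∉ c₂) ∧
    (∀ v ∈ q.tail.dropLast, v ∉ c₁ ∧ v ∉ c₂) ∧
    (c₁ ≠ [] → ∀ h, q.head? = some h → h ∈ c₁) ∧
    (c₂ ≠ [] → ∀ t, q.getLast? = some t → t ∈ c₂) ∧
    (c₁ ≠ [] → c₂ ≠ [] → 2 ≤ q.length) ∧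
    (2 ≤ q.length → ∀ h, q.head? = some h → h ∉ c₂) ∧
    (2 ≤ q.length → ∀ t, q.getLast? = some t → t ∉ c₁) ∧
    F = fun a b => cycleEdges c₁ a b ∨ pathEdges q a b ∨ cycleEdges c₂ a b

open List

namespace List
variable {α : Type*} {R : α → α → Prop}

theorem chain'_cons {a b : α} {l : List α} :
    Chain' R (a :: b :: l) ↔ R a b ∧ Chain' R (b :: l) := isChain_cons_cons

theorem chain'_reverse {l : List α} : Chain' R (reverse l) ↔ Chain' (flip R) l :=
  isChain_reverse

theorem chain'_nil : Chain' R ([] : List α) := IsChain.nil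

theorem chain'_singleton (a : α) : Chain' R [a] := IsChain.singleton a

theorem Chain'.imp {S : α → α → Prop} (H : ∀ a b, R a b → S a b) {l : List α}
    (p : Chain' R l) : Chain' S l := IsChain.imp (fun a b h => H a b h) p

theorem Chain'.prefix {l l₁ : List α} (h : Chain' R l) (h' : l₁ <+: l) : Chain' R l₁ :=
  IsChain.prefix h h'

theorem Chain'.suffix {l l₁ : List α} (h : Chain' R l) (h' : l₁ <:+ l) : Chain' R l₁ :=
  IsChain.suffix h h'

end List

namespace BicycleProof
variable {V : Type*}

lemma det_prefix {R : V → V → Prop}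
    (hdet : ∀ a b c, R a b → R a c → b = c) (p : List V) :
    ∀ (p' : List V), p.Chain' R → p'.Chain' R → p.head? = p'.head? →
      p.length ≤ p'.length → p <+: p' := by
  induction p with
  | nil => intro p' _ _ _ _; exact List.nil_prefix
  | cons a l ih =>
    intro p' hc hc' hh hlen
    cases p' with
    | nil => simp at hh
    | cons a' l' =>
      obtain rfl : a = a' := by simpa using hh
      cases l with
      | nil => exact ⟨l', rfl⟩
      | cons b m =>
        cases l' with
        | nil => simp at hlen
        | cons b' m' =>
          rw [List.chain'_cons] at hc hc'
          obtain rfl : b = b' := hdet a b b' hc.1 hc'.1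
          obtain ⟨t, ht⟩ := ih (b :: m') hc.2 hc'.2 rfl (by simpa using hlen)
          exact ⟨t, by rw [List.cons_append, ht]⟩

lemma codet_suffix {R : V → V → Prop}
    (hco : ∀ a b c, R b a → R c a → b = c)
    (p p' : List V) (hc : p.Chain' R) (hc' : p'.Chain' R)
    (hl : p.getLast? = p'.getLast?) (hlen : p.length ≤ p'.length) : p <:+ p' := by
  rw [← List.reverse_prefix]
  refine det_prefix (R := flip R) (fun a b c h1 h2 => hco a b c h1 h2)
    p.reverse p'.reverse ?_ ?_ ?_ ?_
  · exact List.chain'_reverse.mpr hc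
  · exact List.chain'_reverse.mpr hc'
  · rwa [List.head?_reverse, List.head?_reverse]
  · simpa using hlen

lemma chain'_mem_of_invariant {R : V → V → Prop} {P : V → Prop}
    (hinv : ∀ a b, R a b → P a → P b) :
    ∀ (l : List V) (a : V), Chain' R (a :: l) → P a → ∀ y ∈ a :: l, P y := by
  intro l
  induction l with
  | nil => intro a _ ha y hy; simp only [mem_singleton] at hy; subst hy; exact ha
  | cons b m ih =>
    intro a hc ha y hy
    rw [List.chain'_cons] at hc
    rcases List.mem_cons.mp hy with rfl | hy
    · exact ha
    · exact ih b hc.2 (hinv a b hc.1 ha) y hy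

lemma chain'_mem_of_coinvariant {R : V → V → Prop} {P : V → Prop}
    (hinv : ∀ a b, R a b → P b → P a) (l : List V) (a : V)
    (hc : Chain' R (l ++ [a])) (ha : P a) : ∀ y ∈ l ++ [a], P y := by
  intro y hy
  have hrc : Chain' (flip R) (a :: l.reverse) := by
    have h2 : Chain' (flip (flip R)) (l ++ [a]) := hc
    have h3 := List.chain'_reverse.mpr h2
    simpa using h3
  have h5 := chain'_mem_of_invariant (R := flip R) (P := P)
    (fun x z h hp => hinv z x h hp) l.reverse a hrc ha y
  apply h5
  rcases List.mem_append.mp hy with h | h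
  · exact List.mem_cons_of_mem _ (by simpa using h)
  · simp only [List.mem_singleton] at h
    simp [h]

lemma chain'_and_mem {R : V → V → Prop} {P : V → Prop} :
    ∀ l : List V, Chain' R l → (∀ y ∈ l, P y) →
      Chain' (fun a b => R a b ∧ P a ∧ P b) l := by
  intro l
  induction l with
  | nil => intro _ _; exact List.chain'_nil
  | cons a m ih =>
    intro hc hP
    cases m with
    | nil => exact List.chain'_singleton a
    | cons b m' =>
      rw [List.chain'_cons] at hc ⊢
      exact ⟨⟨hc.1, hP a (by simp), hP b (by simp)⟩,
        ih hc.2 (fun y hy => hP y (List.mem_cons_of_mem a hy))⟩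

lemma chain'_and_of_split {R Q : V → V → Prop} :
    ∀ l : List V, Chain' R l →
      (∀ (l₁ : List V) (a b : V) (l₂ : List V), l = l₁ ++ a :: b :: l₂ → Q a b) →
      Chain' (fun a b => R a b ∧ Q a b) l := by
  intro l
  induction l with
  | nil => intro _ _; exact List.chain'_nil
  | cons a m ih =>
    intro hc hQ
    cases m with
    | nil => exact List.chain'_singleton a
    | cons b m' =>
      rw [List.chain'_cons] at hc ⊢
      refine ⟨⟨hc.1, hQ [] a b m' rfl⟩, ih hc.2 ?_⟩
      intro l₁ x y l₂ h
      exact hQ (a :: l₁) x y l₂ (by rw [h, List.cons_append])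

lemma mem_zip_iff {α β : Type*} :
    ∀ (l₁ : List α) (l₂ : List β) (a : α) (b : β),
      (a, b) ∈ l₁.zip l₂ ↔ ∃ i : ℕ, l₁[i]? = some a ∧ l₂[i]? = some b
  | [], l₂, a, b => by simp
  | x :: xs, [], a, b => by simp
  | x :: xs, y :: ys, a, b => by
    rw [List.zip_cons_cons, List.mem_cons, mem_zip_iff xs ys a b]
    constructor
    · rintro (h | ⟨i, h1, h2⟩)
      · rw [Prod.ext_iff] at h
        obtain ⟨rfl, rfl⟩ := h
        exact ⟨0, by simp, by simp⟩
      · exact ⟨i + 1, by simpa using h1, by simpa using h2⟩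
    · rintro ⟨i, h1, h2⟩
      cases i with
      | zero =>
        left
        simp only [List.getElem?_cons_zero, Option.some.injEq] at h1 h2
        rw [h1, h2]
      | succ i =>
        right
        exact ⟨i, by simpa using h1, by simpa using h2⟩

lemma get?_tail (q : List V) (i : ℕ) : q.tail[i]? = q[i + 1]? := by
  cases q <;> simp

lemma pathEdges_iff (q : List V) (a b : V) :
    pathEdges q a b ↔ ∃ i : ℕ, q[i]? = some a ∧ q[i + 1]? = some b := by
  unfold pathEdges
  rw [mem_zip_iff]
  exact exists_congr fun i => by rw [get?_tail]

lemma cycleEdges_iff (c : List V) (a b : V) :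
    cycleEdges c a b ↔ ∃ i : ℕ, (c)[i]? = some a ∧ (c.rotate 1)[i]? = some b := by
  unfold cycleEdges; rw [mem_zip_iff]

lemma get?_dropLast (l : List V) (i : ℕ) (h : i + 1 < l.length) :
    l.dropLast[i]? = l[i]? := by
  rw [List.dropLast_eq_take, List.getElem?_take, if_pos (by omega)]

lemma pe_det {q : List V} (hnd : q.Nodup) {a b b' : V}
    (h : pathEdges q a b) (h' : pathEdges q a b') : b = b' := by
  obtain ⟨i, h1, h2⟩ := (pathEdges_iff q a b).mp h
  obtain ⟨j, h1', h2'⟩ := (pathEdges_iff q a b').mp h'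
  have hij : i = j := (List.getElem?_inj (List.getElem?_eq_some_iff.mp h1).1 hnd).mp (h1.trans h1'.symm)
  subst hij
  exact Option.some.inj (h2.symm.trans h2')

lemma ce_mem {c : List V} {a b : V} (h : cycleEdges c a b) : a ∈ c ∧ b ∈ c := by
  obtain ⟨h1, h2⟩ := List.of_mem_zip h
  exact ⟨h1, List.mem_rotate.mp h2⟩

lemma ce_det {c : List V} (hnd : c.Nodup) {a b b' : V}
    (h : cycleEdges c a b) (h' : cycleEdges c a b') : b = b' := by
  obtain ⟨i, h1, h2⟩ := (cycleEdges_iff c a b).mp h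
  obtain ⟨j, h1', h2'⟩ := (cycleEdges_iff c a b').mp h'
  have hij : i = j := (List.getElem?_inj (List.getElem?_eq_some_iff.mp h1).1 hnd).mp (h1.trans h1'.symm)
  subst hij
  exact Option.some.inj (h2.symm.trans h2')

lemma ce_codet {c : List V} (hnd : c.Nodup) {a a' b : V}
    (h : cycleEdges c a b) (h' : cycleEdges c a' b) : a = a' := by
  obtain ⟨i, h1, h2⟩ := (cycleEdges_iff c a b).mp h
  obtain ⟨j, h1', h2'⟩ := (cycleEdges_iff c a' b).mp h'
  have hrnd : (c.rotate 1).Nodup := ((List.rotate_perm c 1).nodup_iff).mpr hnd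
  have hij : i = j := (List.getElem?_inj (List.getElem?_eq_some_iff.mp h2).1 hrnd).mp (h2.trans h2'.symm)
  subst hij
  exact Option.some.inj (h1.symm.trans h1')

lemma pe_tgt_mem {q : List V} {a b : V} (h : pathEdges q a b) : b ∈ q.tail :=
  (List.of_mem_zip h).2

lemma pe_src_cases {q0 : V} {qs : List V} {a b : V}
    (h : pathEdges (q0 :: qs) a b) : a = q0 ∨ a ∈ qs.dropLast := by
  obtain ⟨i, h1, h2⟩ := (pathEdges_iff _ a b).mp h
  cases i with
  | zero => left; simpa using h1.symm
  | succ j =>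
    right
    have hb : qs[j + 1]? = some b := by simpa using h2
    have ha : qs[j]? = some a := by simpa using h1
    have hlt : j + 1 < qs.length := (List.getElem?_eq_some_iff.mp hb).1
    exact List.mem_of_getElem? (by rw [get?_dropLast qs j hlt]; exact ha)

lemma mem_dropLast_or_getLast (l : List V) (hl : l ≠ []) (v : V) (hv : v ∈ l) :
    v ∈ l.dropLast ∨ v = l.getLast hl := by
  conv at hv => rw [← List.dropLast_append_getLast hl]
  rcases List.mem_append.mp hv with h | h
  · exact Or.inl h
  · exact Or.inr (by simpa using h)

end BicycleProof

namespace BicycleProof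

lemma pwoNN (g : ℕ → ℕ × ℕ) : ∃ m n, m < n ∧ g m ≤ g n := by
  have h1 : (Set.univ : Set ℕ).IsPWO :=
    (Set.isWF_univ_iff.mpr inferInstance).isPWO
  have h2 : ((Set.univ : Set ℕ) ×ˢ (Set.univ : Set ℕ)).IsPWO := h1.prod h1
  exact h2 (fun n => ⟨g n, by simp⟩)

lemma bicycle_no_antichain {V : Type*} [Fintype V]
    (Fb : V → V → Prop) (hbic : IsBicycle Fb)
    (f : ℕ → List V) (hch : ∀ k, (f k).Chain' Fb)
    (hanti : ∀ j k, j ≠ k → ¬ f j <:+: f k) : False := by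
  classical
  obtain ⟨c₁, q, c₂, hqne, hqnd, h1nd, h2nd, hdisj, hint, _, _, _, hh2, ht2, hFdef⟩ := hbic
  subst hFdef
  obtain ⟨q0, qs, rfl⟩ : ∃ a l, q = a :: l := by
    cases q with
    | nil => exact absurd rfl hqne
    | cons a l => exact ⟨a, l, rfl⟩
  set F : V → V → Prop :=
    fun a b => cycleEdges c₁ a b ∨ pathEdges (q0 :: qs) a b ∨ cycleEdges c₂ a b with hF
  have hq0qs : q0 ∉ qs := (List.nodup_cons.mp hqnd).1
  have hint' : ∀ v ∈ qs.dropLast, v ∉ c₁ ∧ v ∉ c₂ := by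
    intro v hv; exact hint v (by simpa using hv)
  -- basic facts not needing qs ≠ []
  have hdet_away : ∀ u v v', u ≠ q0 → F u v → F u v' → v = v' := by
    intro u v v' hu h h'
    rcases h with h | h | h <;> rcases h' with h' | h' | h'
    · exact ce_det h1nd h h'
    · rcases pe_src_cases h' with rfl | hm
      · exact absurd rfl hu
      · exact absurd (ce_mem h).1 (hint' u hm).1
    · exact absurd (ce_mem h').1 (hdisj u (ce_mem h).1)
    · rcases pe_src_cases h with rfl | hm
      · exact absurd rfl hu
      · exact absurd (ce_mem h').1 (hint' u hm).1
    · exact pe_det hqnd h h'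
    · rcases pe_src_cases h with rfl | hm
      · exact absurd rfl hu
      · exact absurd (ce_mem h').1 (hint' u hm).2
    · exact absurd (ce_mem h).1 (hdisj u (ce_mem h').1)
    · rcases pe_src_cases h' with rfl | hm
      · exact absurd rfl hu
      · exact absurd (ce_mem h).1 (hint' u hm).2
    · exact ce_det h2nd h h'
  -- classification
  set clsB : ℕ → Prop :=
    fun k => ∃ l₁ w l₂, f k = l₁ ++ q0 :: w :: l₂ ∧ pathEdges (q0 :: qs) q0 w with hclsB
  by_cases hinf : {k | clsB k}.Infinite
  · -- Class B: infinitely many walks using the branch edge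
    obtain e := Set.Infinite.natEmbedding _ hinf
    have hcls : ∀ m : ℕ, clsB (e m) := fun m => (e m).2
    choose l₁ w l₂ hsplit hPE using hcls
    have hwqs : ∀ m, w m ∈ qs := fun m => by simpa using pe_tgt_mem (hPE m)
    have hqs : qs ≠ [] := List.ne_nil_of_mem (hwqs 0)
    have hL2 : 2 ≤ (q0 :: qs).length := by
      cases qs with
      | nil => exact absurd rfl hqs
      | cons x xs => simp only [List.length_cons]; omega
    have hq0c₂ : q0 ∉ c₂ := hh2 hL2 q0 rfl
    have htailc₁ : ∀ v ∈ qs, v ∉ c₁ := by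
      intro v hv
      rcases mem_dropLast_or_getLast qs hqs v hv with h | rfl
      · exact (hint' v h).1
      · refine ht2 hL2 _ ?_
        rw [List.getLast?_eq_getLast (l := q0 :: qs) (by simp), List.getLast_cons hqs]
    have hintoc₁ : ∀ u v, F u v → (v ∈ c₁ ∨ v = q0) → cycleEdges c₁ u v := by
      intro u v h hv
      rcases h with h | h | h
      · exact h
      · have hvqs : v ∈ qs := by simpa using pe_tgt_mem h
        rcases hv with hv | rfl
        · exact absurd hv (htailc₁ v hvqs)
        · exact absurd hvqs hq0qs
      · rcases hv with hv | rfl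
        · exact absurd (ce_mem h).2 (hdisj v hv)
        · exact absurd (ce_mem h).2 hq0c₂
    set P : V → Prop := fun v => v ∈ c₁ ∨ v = q0 with hP
    set Gco : V → V → Prop := fun u v => F u v ∧ P v with hGco
    have hGco_codet : ∀ a b c, Gco b a → Gco c a → b = c := by
      intro a b c hb hc
      exact ce_codet h1nd (hintoc₁ b a hb.1 hb.2) (hintoc₁ c a hc.1 hc.2)
    set S : V → Prop := fun v => v ∈ qs ∨ v ∈ c₂ with hS
    have hSinv : ∀ u v, F u v → S u → S v := by
      intro u v h hu
      rcases h with h | h | h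
      · rcases hu with hu | hu
        · exact absurd (ce_mem h).1 (htailc₁ u hu)
        · exact absurd hu (hdisj u (ce_mem h).1)
      · exact Or.inl (by simpa using pe_tgt_mem h)
      · exact Or.inr (ce_mem h).2
    have hq0S : ¬ S q0 := by
      intro h
      rcases h with h | h
      · exact hq0qs h
      · exact hq0c₂ h
    set H : V → V → Prop :=
      fun u v => F u v ∧ (u = q0 → pathEdges (q0 :: qs) u v) with hH
    have hHdet : ∀ a b c, H a b → H a c → b = c := by
      intro a b c hb hc
      by_cases ha : a = q0
      · exact pe_det hqnd (hb.2 ha) (hc.2 ha)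
      · exact hdet_away a b c ha hb.1 hc.1
    -- chains
    have hpre : ∀ m, Chain' Gco (l₁ m ++ [q0]) := by
      intro m
      have hchain : Chain' F (l₁ m ++ [q0]) := by
        refine (hch (e m)).prefix ?_
        rw [hsplit m]
        exact ⟨w m :: l₂ m, by simp⟩
      have hall : ∀ y ∈ l₁ m ++ [q0], P y :=
        chain'_mem_of_coinvariant
          (fun a b hab hPb => Or.inl (ce_mem (hintoc₁ a b hab hPb)).1)
          (l₁ m) q0 hchain (Or.inr rfl)
      exact (chain'_and_mem _ hchain hall).imp (fun a b h => ⟨h.1, h.2.2⟩)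
    have hpost : ∀ m, Chain' H (q0 :: w m :: l₂ m) := by
      intro m
      have hchain : Chain' F (q0 :: w m :: l₂ m) := by
        refine (hch (e m)).suffix ?_
        rw [hsplit m]
        exact ⟨l₁ m, rfl⟩
      rw [List.chain'_cons] at hchain
      have hall : ∀ y ∈ w m :: l₂ m, S y :=
        chain'_mem_of_invariant hSinv (l₂ m) (w m) hchain.2 (Or.inl (hwqs m))
      rw [List.chain'_cons]
      refine ⟨⟨hchain.1, fun _ => hPE m⟩, ?_⟩
      exact (chain'_and_mem _ hchain.2 hall).imp
        (fun a b h => ⟨h.1, fun heq => absurd (heq ▸ h.2.1) hq0S⟩)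
    -- PWO
    obtain ⟨m, n, hmn, hle⟩ := pwoNN (fun m => ((l₁ m).length, (l₂ m).length))
    have hle1 : (l₁ m).length ≤ (l₁ n).length := hle.1
    have hle2 : (l₂ m).length ≤ (l₂ n).length := hle.2
    have hsuf : (l₁ m ++ [q0]) <:+ (l₁ n ++ [q0]) := by
      refine codet_suffix hGco_codet _ _ (hpre m) (hpre n) ?_ ?_
      · rw [List.getLast?_concat, List.getLast?_concat]
      · simpa using Nat.succ_le_succ hle1
    have hpref : (q0 :: w m :: l₂ m) <+: (q0 :: w n :: l₂ n) := by
      refine det_prefix hHdet _ _ (hpost m) (hpost n) rfl ?_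
      simpa using hle2
    obtain ⟨x, hx⟩ := hsuf
    obtain ⟨y, hy⟩ := hpref
    have hl1 : l₁ n = x ++ l₁ m := by
      have : (x ++ l₁ m) ++ [q0] = l₁ n ++ [q0] := by
        rw [List.append_assoc]; exact hx
      exact (List.append_cancel_right this).symm
    have hne' : (e m : ℕ) ≠ (e n : ℕ) := fun h =>
      absurd (e.injective (Subtype.coe_injective h)) (Nat.ne_of_lt hmn)
    refine hanti (e m) (e n) hne' ⟨x, y, ?_⟩
    rw [hsplit m, hsplit n, hl1, ← hy]
    simp [List.append_assoc]
  · -- Class A: all but finitely many walks avoid the branch edge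
    have hinfA : {k | ¬ clsB k}.Infinite := by
      have hfin := Set.not_infinite.mp hinf
      have := hfin.infinite_compl
      simpa [Set.compl_setOf] using this
    obtain e := Set.Infinite.natEmbedding _ hinfA
    set R : V → V → Prop :=
      fun a b => F a b ∧ ¬(a = q0 ∧ pathEdges (q0 :: qs) a b) with hR
    have hRdet : ∀ a b c, R a b → R a c → b = c := by
      intro a b c hb hc
      by_cases ha : a = q0
      · have hb1 : cycleEdges c₁ a b ∨ cycleEdges c₂ a b := by
          rcases hb.1 with h | h | h
          · exact Or.inl h
          · exact absurd ⟨ha, h⟩ hb.2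
          · exact Or.inr h
        have hc1 : cycleEdges c₁ a c ∨ cycleEdges c₂ a c := by
          rcases hc.1 with h | h | h
          · exact Or.inl h
          · exact absurd ⟨ha, h⟩ hc.2
          · exact Or.inr h
        rcases hb1 with h | h <;> rcases hc1 with h' | h'
        · exact ce_det h1nd h h'
        · exact absurd (ce_mem h').1 (hdisj a (ce_mem h).1)
        · exact absurd (ce_mem h).1 (hdisj a (ce_mem h').1)
        · exact ce_det h2nd h h'
      · exact hdet_away a b c ha hb.1 hc.1
    have hchR : ∀ m : ℕ, Chain' R (f (e m)) := by
      intro m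
      refine chain'_and_of_split _ (hch (e m)) ?_
      intro la a b lb hsp ⟨ha, hpe⟩
      exact (e m).2 ⟨la, b, lb, by rw [hsp, ha], ha ▸ hpe⟩
    obtain ⟨v, hv⟩ := Finite.exists_infinite_fiber (fun m => (f (e m)).head?)
    have hvinf : ((fun m => (f (e m)).head?) ⁻¹' {v}).Infinite := Set.infinite_coe_iff.mp hv
    obtain e' := Set.Infinite.natEmbedding _ hvinf
    have hhead : ∀ i : ℕ, (f (e (e' i))).head? = v := fun i => (e' i).2
    have hne01 : ((e' 0 : ℕ) : ℕ) ≠ (e' 1 : ℕ) := by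
      intro h
      have h2 : (0 : ℕ) = 1 := e'.injective (Subtype.coe_injective h)
      exact absurd h2 (by norm_num)
    have hne' : (e (e' 0) : ℕ) ≠ (e (e' 1) : ℕ) := by
      intro h
      exact hne01 (e.injective (Subtype.coe_injective h))
    rcases le_total (f (e (e' 0))).length (f (e (e' 1))).length with hlen | hlen
    · exact hanti _ _ hne'
        ((det_prefix hRdet _ _ (hchR (e' 0)) (hchR (e' 1))
          ((hhead 0).trans (hhead 1).symm) hlen).isInfix)
    · exact hanti _ _ (Ne.symm hne')
        ((det_prefix hRdet _ _ (hchR (e' 1)) (hchR (e' 0))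
          ((hhead 1).trans (hhead 0).symm) hlen).isInfix)

end BicycleProof

namespace BicycleProof

theorem stmt1_aux {V : Type*} [Fintype V] (E : V → V → Prop)
    (n : ℕ) (F : Fin n → V → V → Prop)
    (hsub : ∀ i a b, F i a b → E a b)
    (hbic : ∀ i, IsBicycle (F i))
    (hdec : ∀ p : List V, p ≠ [] → p.Chain' E → ∃ i, p.Chain' (F i)) :
    ¬ ∃ f : ℕ → List V, (∀ k, f k ≠ [] ∧ (f k).Chain' E) ∧
        ∀ j k, j ≠ k → ¬ f j <:+: f k := by
  rintro ⟨f, hf, hanti⟩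
  have hch : ∀ k, ∃ i, (f k).Chain' (F i) := fun k => hdec (f k) (hf k).1 (hf k).2
  choose g hg using hch
  obtain ⟨i, hi⟩ := Finite.exists_infinite_fiber g
  have hinf : (g ⁻¹' {i}).Infinite := Set.infinite_coe_iff.mp hi
  obtain e := Set.Infinite.natEmbedding _ hinf
  refine bicycle_no_antichain (F i) (hbic i) (fun m => f (e m)) ?_ ?_
  · intro m
    have h2 : g (e m : ℕ) = i := (e m).2
    have h3 := hg (e m : ℕ)
    rwa [h2] at h3
  · intro j k hjk
    exact hanti (e j) (e k)
      (fun h => hjk (e.injective (Subtype.coe_injective h)))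

end BicycleProof

/-- If a finite digraph has a path complete decomposition into bicycles,
then its set of paths contains no infinite antichain under the subpath order. -/
theorem stmt1 {V : Type*} [Fintype V] (E : V → V → Prop)
    (n : ℕ) (F : Fin n → V → V → Prop)
    (hsub : ∀ i a b, F i a b → E a b)
    (hbic : ∀ i, IsBicycle (F i))
    (hdec : ∀ p : List V, p ≠ [] → p.Chain' E → ∃ i, p.Chain' (F i)) :
    ¬ ∃ f : ℕ → List V, (∀ k, f k ≠ [] ∧ (f k).Chain' E) ∧
        ∀ j k, j ≠ k → ¬ f j <:+: f k := by
  exact BicycleProof.stmt1_aux E n F hsub hbic hdec
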